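/- Let α = (α_i)_{i≥0} be the sequence of nonzero Fibonacci numbers, α_i = F(i+1) where F(0) = 0, F(1) = 1, and let β = (β_i)_{i≥0} be the sequence of factorials β_i = (i+1)!. Then for every integer n ≥ 2, det(P_{α,β}(n)) = (-1)^n. -/

import Mathlib

open Matrix

/-- Entry `P_{i,j}` of the generalized Pascal triangle associated to sequences `α`, `β`:
`P_{i,0} = α i`, `P_{0,j} = β j`, and `P_{i,j} = P_{i-1,j} + P_{i,j-1}` for `i, j ≥ 1`. -/
def pascalEntry {R : Type*} [CommRing R] (α β : ℕ → R) : ℕ → ℕ → R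
  | i, 0 => α i
  | 0, j + 1 => β (j + 1)
  | i + 1, j + 1 => pascalEntry α β i (j + 1) + pascalEntry α β (i + 1) j

/-- The generalized Pascal triangle `P_{α,β}(n)`. -/
def genPascal {R : Type*} [CommRing R] (α β : ℕ → R) (n : ℕ) :
    Matrix (Fin n) (Fin n) R :=
  Matrix.of fun i j => pascalEntry α β (i : ℕ) (j : ℕ)

/-- The Töplitz matrix `T_{α,β}(n)`: `t_{i,j} = α_{i-j}` if `i ≥ j`, else `β_{j-i}`. -/
def toeplitz {R : Type*} [CommRing R] (α β : ℕ → R) (n : ℕ) :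
    Matrix (Fin n) (Fin n) R :=
  Matrix.of fun i j => if (j : ℕ) ≤ (i : ℕ) then α ((i : ℕ) - (j : ℕ)) else β ((j : ℕ) - (i : ℕ))

/-- The unipotent lower triangular matrix `L(n)` with `L_{i,j} = C(i,j)` for `i ≥ j`. -/
def lowerL (R : Type*) [CommRing R] (n : ℕ) : Matrix (Fin n) (Fin n) R :=
  Matrix.of fun i j => if (j : ℕ) ≤ (i : ℕ) then ((i : ℕ).choose (j : ℕ) : R) else 0

/-- The binomial inverse transform `α̂_i = ∑_{k=0}^{i} (-1)^{i+k} C(i,k) α_k`. -/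
def hatSeq {R : Type*} [CommRing R] (α : ℕ → R) (i : ℕ) : R :=
  ∑ k ∈ Finset.range (i + 1), (-1 : R) ^ (i + k) * (i.choose k : R) * α k

/-- The binomial transform `α̌_i = ∑_{k=0}^{i} C(i,k) α_k`. -/
def checkSeq {R : Type*} [CommRing R] (α : ℕ → R) (i : ℕ) : R :=
  ∑ k ∈ Finset.range (i + 1), (i.choose k : R) * α k

section Aux
variable {R : Type*} [CommRing R]

theorem checkSeq_succ (f : ℕ → R) (n : ℕ) :
    checkSeq f (n + 1) = checkSeq f n + checkSeq (fun k => f (k + 1)) n := by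
  unfold checkSeq
  rw [Finset.sum_range_succ' (fun k => ((n+1).choose k : R) * f k) (n+1),
      Finset.sum_range_succ' (fun k => (n.choose k : R) * f k) n]
  simp only [Nat.choose_succ_succ, Nat.choose_zero_right, Nat.cast_add, Nat.cast_one, add_mul]
  rw [Finset.sum_add_distrib]
  have h1 : ∑ i ∈ Finset.range (n+1), ((n.choose (i+1) : R)) * f (i+1)
      = ∑ i ∈ Finset.range n, ((n.choose (i+1) : R)) * f (i+1) := by
    rw [Finset.sum_range_succ, Nat.choose_succ_self]
    simp
  rw [h1]; ring

theorem hatSeq_succ (f : ℕ → R) (n : ℕ) :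
    hatSeq f (n + 1) = hatSeq (fun k => f (k + 1)) n - hatSeq f n := by
  unfold hatSeq
  rw [Finset.sum_range_succ' (fun k => (-1:R)^(n+1+k) * ((n+1).choose k : R) * f k) (n+1),
      Finset.sum_range_succ' (fun k => (-1:R)^(n+k) * (n.choose k : R) * f k) n]
  simp only [Nat.choose_succ_succ, Nat.choose_zero_right, Nat.cast_add, Nat.cast_one]
  have h1 : ∑ i ∈ Finset.range (n+1), (-1:R)^(n+1+(i+1)) * ((n.choose i : R) + (n.choose (i+1) : R)) * f (i+1)
      = ∑ i ∈ Finset.range (n+1), ((-1:R)^(n+i) * (n.choose i : R) * f (i+1)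
        + (-1:R)^(n+(i+1)) * (n.choose (i+1) : R) * f (i+1) * (-1)) := by
    apply Finset.sum_congr rfl; intro i _
    rw [show n + 1 + (i + 1) = (n + i) + 1 + 1 by ring, pow_succ, pow_succ,
        show n + (i + 1) = (n + i) + 1 by ring, pow_succ]
    ring
  rw [h1, Finset.sum_add_distrib]
  have h2 : ∑ i ∈ Finset.range (n+1), (-1:R)^(n+(i+1)) * (n.choose (i+1) : R) * f (i+1) * (-1)
      = -∑ i ∈ Finset.range n, (-1:R)^(n+(i+1)) * (n.choose (i+1) : R) * f (i+1) := by
    rw [Finset.sum_range_succ, Nat.choose_succ_self, ← Finset.sum_neg_distrib]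
    simp
  rw [h2, show (-1:R)^(n+1+0) = (-1:R)^(n+0) * (-1) by simp [pow_succ]]
  ring

theorem checkSeq_sub (g h : ℕ → R) (n : ℕ) :
    checkSeq (fun k => g k - h k) n = checkSeq g n - checkSeq h n := by
  unfold checkSeq
  rw [← Finset.sum_sub_distrib]
  exact Finset.sum_congr rfl fun k _ => by ring

theorem checkSeq_add (g h : ℕ → R) (n : ℕ) :
    checkSeq (fun k => g k + h k) n = checkSeq g n + checkSeq h n := by
  unfold checkSeq
  rw [← Finset.sum_add_distrib]
  exact Finset.sum_congr rfl fun k _ => by ring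

theorem checkSeq_hatSeq (n : ℕ) : ∀ (f : ℕ → R), checkSeq (hatSeq f) n = f n := by
  induction n with
  | zero => intro f; simp [checkSeq, hatSeq]
  | succ n ih =>
    intro f
    rw [checkSeq_succ]
    have : (fun k => hatSeq f (k + 1))
        = fun k => hatSeq (fun j => f (j + 1)) k - hatSeq f k :=
      funext fun k => hatSeq_succ f k
    rw [ih f, this, checkSeq_sub, ih f, ih (fun j => f (j+1))]
    ring

end Aux

section
variable {R : Type*} [CommRing R]

/-- Toeplitz entry function. -/
def tE (a b : ℕ → R) (k l : ℕ) : R := if l ≤ k then a (k - l) else b (l - k)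

theorem tE_shift (a b : ℕ → R) (k l : ℕ) : tE a b (k + 1) (l + 1) = tE a b k l := by
  unfold tE
  simp [Nat.succ_sub_succ]

theorem checkSeq_zero (g : ℕ → R) : checkSeq g 0 = g 0 := by simp [checkSeq]

/-- The double binomial transform of the Toeplitz array. -/
def S (a b : ℕ → R) (i j : ℕ) : R := checkSeq (fun k => checkSeq (fun l => tE a b k l) j) i

theorem S_succ_left (a b : ℕ → R) (i j : ℕ) :
    S a b (i + 1) j = S a b i j + checkSeq (fun k => checkSeq (fun l => tE a b (k + 1) l) j) i := by
  unfold S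
  rw [checkSeq_succ]

theorem S_succ_right (a b : ℕ → R) (i j : ℕ) :
    S a b i (j + 1) = S a b i j + checkSeq (fun k => checkSeq (fun l => tE a b k (l + 1)) j) i := by
  unfold S
  rw [← checkSeq_add]
  apply Finset.sum_congr rfl; intro k _
  congr 1
  exact checkSeq_succ _ j

theorem S_rec (a b : ℕ → R) (i j : ℕ) :
    S a b (i + 1) (j + 1) = S a b i (j + 1) + S a b (i + 1) j := by
  rw [S_succ_left a b i (j+1), S_succ_right a b i j, S_succ_left a b i j]
  have hfun : (fun k => checkSeq (fun l => tE a b (k + 1) l) (j + 1))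
      = fun k => checkSeq (fun l => tE a b (k + 1) l) j + checkSeq (fun l => tE a b k l) j := by
    funext k
    rw [checkSeq_succ]
    simp only [tE_shift]
  rw [hfun, checkSeq_add]
  unfold S
  ring

theorem S_left (a b : ℕ → R) (i : ℕ) : S a b i 0 = checkSeq a i := by
  unfold S
  apply Finset.sum_congr rfl; intro k _
  congr 1
  show checkSeq (fun l => tE a b k l) 0 = a k
  rw [checkSeq_zero]
  simp [tE]

theorem S_right (a b : ℕ → R) (j : ℕ) (hab : a 0 = b 0) :
    S a b 0 j = checkSeq b j := by
  unfold S
  rw [checkSeq_zero]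
  apply Finset.sum_congr rfl; intro l _
  congr 1
  show (if l ≤ 0 then a (0 - l) else b (l - 0)) = b l
  rcases Nat.eq_zero_or_pos l with h | h
  · subst h; simpa using hab
  · rw [if_neg (by omega), Nat.sub_zero]

end

section
variable {R : Type*} [CommRing R]

theorem hatSeq_zero (f : ℕ → R) : hatSeq f 0 = f 0 := by simp [hatSeq]

theorem pascalEntry_eq_S (α β : ℕ → R) (hab : α 0 = β 0) :
    ∀ i j, pascalEntry α β i j = S (hatSeq α) (hatSeq β) i j := by
  have hab' : hatSeq α 0 = hatSeq β 0 := by rw [hatSeq_zero, hatSeq_zero, hab]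
  intro i
  induction i with
  | zero =>
    intro j
    cases j with
    | zero => rw [S_left]; simp [pascalEntry, checkSeq_zero, hatSeq_zero]
    | succ j =>
      rw [S_right _ _ _ hab', checkSeq_hatSeq]
      simp [pascalEntry]
  | succ i ih =>
    intro j
    induction j with
    | zero =>
      rw [S_left, checkSeq_hatSeq]
      simp [pascalEntry]
    | succ j ihj =>
      rw [show pascalEntry α β (i+1) (j+1)
            = pascalEntry α β i (j+1) + pascalEntry α β (i+1) j from by rw [pascalEntry],
          ih (j+1), ihj, S_rec]

theorem sum_fin_choose {n : ℕ} (i : Fin n) (f : ℕ → R) :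
    ∑ k : Fin n, (if (k:ℕ) ≤ (i:ℕ) then (((i:ℕ).choose k : ℕ) : R) else 0) * f k
      = checkSeq f i := by
  rw [Fin.sum_univ_eq_sum_range
    (fun k => (if k ≤ (i:ℕ) then (((i:ℕ).choose k : ℕ) : R) else 0) * f k)]
  rw [checkSeq]
  rw [← Finset.sum_subset (Finset.range_subset_range.mpr (by omega : (i:ℕ) + 1 ≤ n))]
  · apply Finset.sum_congr rfl
    intro k hk
    rw [if_pos (by simpa [Nat.lt_succ_iff] using Finset.mem_range.mp hk)]
  · intro k _ hk
    have h2 : ¬ (k ≤ (i:ℕ)) := fun h => hk (Finset.mem_range.mpr (by omega))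
    rw [if_neg h2, zero_mul]

theorem genPascal_factor (α β : ℕ → R) (hab : α 0 = β 0) (n : ℕ) :
    genPascal α β n
      = lowerL R n * toeplitz (hatSeq α) (hatSeq β) n * (lowerL R n)ᵀ := by
  ext i j
  rw [Matrix.mul_apply]
  have step1 : ∀ l : Fin n,
      (lowerL R n * toeplitz (hatSeq α) (hatSeq β) n) i l
        = checkSeq (fun k => tE (hatSeq α) (hatSeq β) k (l : ℕ)) i := by
    intro l
    rw [Matrix.mul_apply]
    rw [show (∑ k : Fin n, lowerL R n i k * toeplitz (hatSeq α) (hatSeq β) n k l)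
        = ∑ k : Fin n, (if (k:ℕ) ≤ (i:ℕ) then (((i:ℕ).choose k : ℕ) : R) else 0)
            * (fun m => tE (hatSeq α) (hatSeq β) m (l : ℕ)) (k : ℕ) from
      Finset.sum_congr rfl fun k _ => rfl]
    exact sum_fin_choose i (fun m => tE (hatSeq α) (hatSeq β) m (l : ℕ))
  have main : ∑ l : Fin n,
        (lowerL R n * toeplitz (hatSeq α) (hatSeq β) n) i l * (lowerL R n)ᵀ l j
      = S (hatSeq α) (hatSeq β) (i:ℕ) (j:ℕ) := by
    calc ∑ l : Fin n, (lowerL R n * toeplitz (hatSeq α) (hatSeq β) n) i l * (lowerL R n)ᵀ l j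
        = ∑ l : Fin n,
          (if (l:ℕ) ≤ (j:ℕ) then (((j:ℕ).choose l : ℕ) : R) else 0)
            * (fun m => checkSeq (fun k => tE (hatSeq α) (hatSeq β) k m) i) (l : ℕ) := by
          apply Finset.sum_congr rfl
          intro l _
          rw [step1 l, Matrix.transpose_apply]
          have hL : lowerL R n j l
              = (if (l:ℕ) ≤ (j:ℕ) then (((j:ℕ).choose l : ℕ) : R) else 0) := rfl
          rw [hL, mul_comm]
      _ = checkSeq (fun m => checkSeq (fun k => tE (hatSeq α) (hatSeq β) k m) i) j :=
          sum_fin_choose j (fun m => checkSeq (fun k => tE (hatSeq α) (hatSeq β) k m) i)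
      _ = S (hatSeq α) (hatSeq β) (i:ℕ) (j:ℕ) := by
          unfold S checkSeq
          simp only [Finset.mul_sum]
          rw [Finset.sum_comm]
          apply Finset.sum_congr rfl; intro k _
          apply Finset.sum_congr rfl; intro l _
          ring
  rw [main]
  simp only [genPascal, Matrix.of_apply]
  exact pascalEntry_eq_S α β hab i j
end

section DetPart

theorem det_lowerL {R : Type*} [CommRing R] (n : ℕ) : (lowerL R n).det = 1 := by
  rw [Matrix.det_of_lowerTriangular (lowerL R n)
    (fun i j hij => by
      have h : (i:ℕ) < (j:ℕ) := hij
      show lowerL R n i j = 0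
      unfold lowerL
      rw [Matrix.of_apply, if_neg (by omega)])]
  apply Finset.prod_eq_one
  intro i _
  simp [lowerL]

/-- Row-operation matrix: adds row (i-1) and subtracts row (i-2) for i ≥ 2. -/
def Amat (n : ℕ) : Matrix (Fin n) (Fin n) ℤ :=
  Matrix.of fun i j =>
    (if i = j then (1:ℤ) else 0)
    + (if 2 ≤ (i:ℕ) ∧ (j:ℕ) + 1 = (i:ℕ) then 1 else 0)
    - (if 2 ≤ (i:ℕ) ∧ (j:ℕ) + 2 = (i:ℕ) then 1 else 0)

theorem Amat_det (n : ℕ) : (Amat n).det = 1 := by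
  rw [Matrix.det_of_lowerTriangular (Amat n)
    (fun i j hij => by
      have h : (i:ℕ) < (j:ℕ) := hij
      have h1 : i ≠ j := ne_of_lt hij
      have h2 : ¬(2 ≤ (i:ℕ) ∧ (j:ℕ) + 1 = (i:ℕ)) := by omega
      have h3 : ¬(2 ≤ (i:ℕ) ∧ (j:ℕ) + 2 = (i:ℕ)) := by omega
      simp [Amat, h1, h2, h3])]
  apply Finset.prod_eq_one
  intro i _
  have h2 : ¬(2 ≤ (i:ℕ) ∧ (i:ℕ) + 1 = (i:ℕ)) := by omega
  have h3 : ¬(2 ≤ (i:ℕ) ∧ (i:ℕ) + 2 = (i:ℕ)) := by omega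
  simp [Amat, h2, h3]

theorem Amat_mul {n : ℕ} (T : Matrix (Fin n) (Fin n) ℤ) (i j : Fin n) (h2 : 2 ≤ (i:ℕ)) :
    (Amat n * T) i j
      = T i j + T ⟨(i:ℕ) - 1, lt_of_le_of_lt (Nat.sub_le _ _) i.isLt⟩ j
          - T ⟨(i:ℕ) - 2, lt_of_le_of_lt (Nat.sub_le _ _) i.isLt⟩ j := by
  set i1 : Fin n := ⟨(i:ℕ) - 1, lt_of_le_of_lt (Nat.sub_le _ _) i.isLt⟩
  set i2 : Fin n := ⟨(i:ℕ) - 2, lt_of_le_of_lt (Nat.sub_le _ _) i.isLt⟩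
  rw [Matrix.mul_apply]
  have expand : ∀ k : Fin n, Amat n i k * T k j
      = (if i = k then (1:ℤ) else 0) * T k j
        + (if 2 ≤ (i:ℕ) ∧ (k:ℕ) + 1 = (i:ℕ) then (1:ℤ) else 0) * T k j
        - (if 2 ≤ (i:ℕ) ∧ (k:ℕ) + 2 = (i:ℕ) then (1:ℤ) else 0) * T k j := by
    intro k
    show (Amat n) i k * T k j = _
    unfold Amat
    rw [Matrix.of_apply]
    ring
  rw [Finset.sum_congr rfl (fun k _ => expand k), Finset.sum_sub_distrib,
    Finset.sum_add_distrib]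
  have e1 : ∑ k : Fin n, (if i = k then (1:ℤ) else 0) * T k j = T i j := by
    rw [Finset.sum_eq_single i
      (fun k _ hk => by rw [if_neg (Ne.symm hk), zero_mul])
      (fun h => absurd (Finset.mem_univ i) h)]
    rw [if_pos rfl, one_mul]
  have e2 : ∑ k : Fin n, (if 2 ≤ (i:ℕ) ∧ (k:ℕ) + 1 = (i:ℕ) then (1:ℤ) else 0) * T k j
      = T i1 j := by
    rw [Finset.sum_eq_single i1
      (fun k _ hk => by
        rw [if_neg, zero_mul]
        rintro ⟨-, hke⟩
        exact hk (Fin.ext (by simp only [i1]; omega)))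
      (fun h => absurd (Finset.mem_univ i1) h)]
    rw [if_pos ⟨h2, by simp only [i1]; omega⟩, one_mul]
  have e3 : ∑ k : Fin n, (if 2 ≤ (i:ℕ) ∧ (k:ℕ) + 2 = (i:ℕ) then (1:ℤ) else 0) * T k j
      = T i2 j := by
    rw [Finset.sum_eq_single i2
      (fun k _ hk => by
        rw [if_neg, zero_mul]
        rintro ⟨-, hke⟩
        exact hk (Fin.ext (by simp only [i2]; omega)))
      (fun h => absurd (Finset.mem_univ i2) h)]
    rw [if_pos ⟨h2, by simp only [i2]; omega⟩, one_mul]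
  rw [e1, e2, e3]

theorem Amat_mul_small {n : ℕ} (T : Matrix (Fin n) (Fin n) ℤ) (i j : Fin n)
    (h2 : (i:ℕ) < 2) : (Amat n * T) i j = T i j := by
  rw [Matrix.mul_apply]
  rw [Finset.sum_eq_single i
    (fun k _ hk => by
      show (Amat n) i k * T k j = 0
      unfold Amat
      rw [Matrix.of_apply, if_neg (Ne.symm hk), if_neg (by omega), if_neg (by omega)]
      ring)
    (fun h => absurd (Finset.mem_univ i) h)]
  show (Amat n) i i * T i j = T i j
  unfold Amat
  rw [Matrix.of_apply, if_pos rfl, if_neg (by omega), if_neg (by omega)]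
  ring

theorem toeplitz_apply_le {n : ℕ} (a b : ℕ → ℤ) (i j : Fin n) (h : (j:ℕ) ≤ (i:ℕ)) :
    toeplitz a b n i j = a ((i:ℕ) - (j:ℕ)) := by
  unfold toeplitz; rw [Matrix.of_apply, if_pos h]

theorem toeplitz_apply_gt {n : ℕ} (a b : ℕ → ℤ) (i j : Fin n) (h : (i:ℕ) < (j:ℕ)) :
    toeplitz a b n i j = b ((j:ℕ) - (i:ℕ)) := by
  unfold toeplitz; rw [Matrix.of_apply, if_neg (by omega)]

theorem prod_sign (n : ℕ) (hn : 2 ≤ n) :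
    (∏ i ∈ Finset.range n, if i ≤ 1 then (1:ℤ) else -1) = (-1 : ℤ) ^ n := by
  induction n, hn using Nat.le_induction with
  | base => decide
  | succ n hn ih =>
    rw [Finset.prod_range_succ, ih, if_neg (by omega), pow_succ]

theorem det_toeplitz (a b : ℕ → ℤ) (ha0 : a 0 = 1) (ha1 : a 1 = 0)
    (harec : ∀ m, a (m + 2) = a m - a (m + 1)) (hb1 : b 1 = 1) (hb2 : b 2 = 3)
    (n : ℕ) (hn : 2 ≤ n) : (toeplitz a b n).det = (-1 : ℤ) ^ n := by
  have hdet : (Amat n * toeplitz a b n).det = (toeplitz a b n).det := by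
    rw [Matrix.det_mul, Amat_det, one_mul]
  rw [← hdet]
  rw [Matrix.det_of_upperTriangular (M := Amat n * toeplitz a b n) ?tri]
  case tri =>
    intro i j hij
    have hji : (j:ℕ) < (i:ℕ) := hij
    by_cases h2 : 2 ≤ (i:ℕ)
    · rw [Amat_mul _ _ _ h2]
      by_cases hj : (j:ℕ) + 2 ≤ (i:ℕ)
      · rw [toeplitz_apply_le a b _ _ (by omega),
            toeplitz_apply_le a b _ _ (by simp only []; omega),
            toeplitz_apply_le a b _ _ (by simp only []; omega)]
        simp only []
        rw [show (i:ℕ) - (j:ℕ) = ((i:ℕ) - 2 - (j:ℕ)) + 2 by omega,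
            show (i:ℕ) - 1 - (j:ℕ) = ((i:ℕ) - 2 - (j:ℕ)) + 1 by omega,
            harec]
        ring
      · -- j = i - 1
        rw [toeplitz_apply_le a b _ _ (by omega),
            toeplitz_apply_le a b _ _ (by simp only []; omega),
            toeplitz_apply_gt a b _ _ (by simp only []; omega)]
        simp only []
        rw [show (i:ℕ) - (j:ℕ) = 1 by omega,
            show (i:ℕ) - 1 - (j:ℕ) = 0 by omega,
            show (j:ℕ) - ((i:ℕ) - 2) = 1 by omega,
            ha0, ha1, hb1]
        ring
    · rw [Amat_mul_small _ _ _ (by omega),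
          toeplitz_apply_le a b _ _ (by omega),
          show (i:ℕ) - (j:ℕ) = 1 by omega, ha1]
  have hdiag : ∀ i : Fin n, (Amat n * toeplitz a b n) i i
      = if (i:ℕ) ≤ 1 then (1:ℤ) else -1 := by
    intro i
    by_cases h2 : 2 ≤ (i:ℕ)
    · rw [Amat_mul _ _ _ h2, if_neg (by omega)]
      rw [toeplitz_apply_le a b _ _ le_rfl,
          toeplitz_apply_gt a b _ _ (by simp only []; omega),
          toeplitz_apply_gt a b _ _ (by simp only []; omega)]
      simp only []
      rw [Nat.sub_self, show (i:ℕ) - ((i:ℕ) - 1) = 1 by omega,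
          show (i:ℕ) - ((i:ℕ) - 2) = 2 by omega, ha0, hb1, hb2]
      ring
    · rw [Amat_mul_small _ _ _ (by omega), if_pos (by omega),
          toeplitz_apply_le a b _ _ le_rfl, Nat.sub_self, ha0]
  rw [Finset.prod_congr rfl (fun i _ => hdiag i)]
  rw [Fin.prod_univ_eq_prod_range (fun i => if i ≤ 1 then (1:ℤ) else -1) n]
  exact prod_sign n hn

end DetPart

section Final

theorem hatSeq_add {R : Type*} [CommRing R] (f g : ℕ → R) (n : ℕ) :
    hatSeq (fun k => f k + g k) n = hatSeq f n + hatSeq g n := by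
  unfold hatSeq
  rw [← Finset.sum_add_distrib]
  exact Finset.sum_congr rfl fun k _ => by ring

theorem fib_pair (m : ℕ) :
    hatSeq (fun i => (Nat.fib (i + 1) : ℤ)) (m + 1) = hatSeq (fun i => (Nat.fib i : ℤ)) m
    ∧ hatSeq (fun i => (Nat.fib i : ℤ)) (m + 1)
      = hatSeq (fun i => (Nat.fib (i + 1) : ℤ)) m - hatSeq (fun i => (Nat.fib i : ℤ)) m := by
  constructor
  · rw [hatSeq_succ]
    have h1 : (fun k => (Nat.fib (k + 1 + 1) : ℤ))
        = fun k => (Nat.fib (k + 1) : ℤ) + (Nat.fib k : ℤ) := by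
      funext k
      rw [Nat.fib_add_two]
      push_cast
      ring
    rw [h1, hatSeq_add]
    ring
  · rw [hatSeq_succ]

theorem hat_fib_zero : hatSeq (fun i => (Nat.fib (i + 1) : ℤ)) 0 = 1 := by
  rw [hatSeq_zero]; norm_num

theorem hat_fib_one : hatSeq (fun i => (Nat.fib (i + 1) : ℤ)) 1 = 0 := by
  rw [(fib_pair 0).1, hatSeq_zero]; norm_num

theorem hat_fib_rec (m : ℕ) :
    hatSeq (fun i => (Nat.fib (i + 1) : ℤ)) (m + 2)
      = hatSeq (fun i => (Nat.fib (i + 1) : ℤ)) m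
        - hatSeq (fun i => (Nat.fib (i + 1) : ℤ)) (m + 1) := by
  rw [(fib_pair (m + 1)).1, (fib_pair m).2, (fib_pair m).1]

theorem hat_fact_one : hatSeq (fun i => ((i + 1).factorial : ℤ)) 1 = 1 := by
  simp [hatSeq, Finset.sum_range_succ, Nat.factorial]

theorem hat_fact_two : hatSeq (fun i => ((i + 1).factorial : ℤ)) 2 = 3 := by
  simp [hatSeq, Finset.sum_range_succ, Nat.factorial]

end Final

theorem det_genPascal_fib_factorial' (n : ℕ) (hn : 2 ≤ n) :
    (genPascal (fun i => (Nat.fib (i + 1) : ℤ)) (fun i => ((i + 1).factorial : ℤ)) n).det =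
      (-1 : ℤ) ^ n := by
  have hab : ((fun i => (Nat.fib (i + 1) : ℤ)) 0) = ((fun i => ((i + 1).factorial : ℤ)) 0) := by
    norm_num
  rw [genPascal_factor _ _ hab n, Matrix.det_mul, Matrix.det_mul, Matrix.det_transpose,
    det_lowerL, one_mul, mul_one]
  exact det_toeplitz _ _ hat_fib_zero hat_fib_one hat_fib_rec hat_fact_one hat_fact_two n hn


/-- for `α_i = F(i+1)` (nonzero Fibonacci numbers) and `β_i = (i+1)!`,
`det(P_{α,β}(n)) = (-1)^n` for `n ≥ 2`. -/
theorem det_genPascal_fib_factorial (n : ℕ) (hn : 2 ≤ n) :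
    (genPascal (fun i => (Nat.fib (i + 1) : ℤ)) (fun i => ((i + 1).factorial : ℤ)) n).det =
      (-1 : ℤ) ^ n := by
  have hab : ((fun i => (Nat.fib (i + 1) : ℤ)) 0) = ((fun i => ((i + 1).factorial : ℤ)) 0) := by
    norm_num
  rw [genPascal_factor _ _ hab n, Matrix.det_mul, Matrix.det_mul, Matrix.det_transpose,
    det_lowerL, one_mul, mul_one]
  exact det_toeplitz _ _ hat_fib_zero hat_fib_one hat_fib_rec hat_fact_one hat_fact_two n hn
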